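/- arXiv:2204.04273 — 3 statements merged into one kernel-verified Lean document; each statement's English description precedes it below -/
import Mathlib

section
/- For every W ∈ ℝ^{m₁m₂×n₁n₂} and every k ≥ 1, the minimal squared-Frobenius error of approximating W by a sum of k Kronecker products equals the minimal squared-Frobenius error of approximating the rearrangement ℛ(W) by a matrix of rank at most k; that is, min over all L^{(j)} ∈ ℝ^{m₁×n₁}, R^{(j)} ∈ ℝ^{m₂×n₂} (j=1,…,k) of ‖W − Σ_{j=1}^k L^{(j)} ⊗ R^{(j)}‖_F² equals min over all M ∈ ℝ^{m₁n₁×m₂n₂} with rank(M) ≤ k of ‖ℛ(W) − M‖_F², and both minima are attained. -/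
open Matrix Kronecker

/-- The rearrangement `ℛ(W) ∈ ℝ^{m₁n₁×m₂n₂}` of `W ∈ ℝ^{m₁m₂×n₁n₂}`, defined entrywise by
`ℛ(W)_{(i₁,j₁),(i₂,j₂)} = W_{(i₁,i₂),(j₁,j₂)}`. -/
def rearrange {m₁ m₂ n₁ n₂ : ℕ} (W : Matrix (Fin m₁ × Fin m₂) (Fin n₁ × Fin n₂) ℝ) :
    Matrix (Fin m₁ × Fin n₁) (Fin m₂ × Fin n₂) ℝ :=
  fun p q => W (p.1, q.1) (p.2, q.2)

/-- The Frobenius norm: the square root of the sum of squared entries. -/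
noncomputable def frob {m n : Type*} [Fintype m] [Fintype n] (A : Matrix m n ℝ) : ℝ :=
  Real.sqrt (∑ i, ∑ j, (A i j) ^ 2)

section Helpers

variable {ι₁ ι₂ : Type*} [Fintype ι₁] [Fintype ι₂]

/-- View a function as an element of Euclidean space. -/
def toEuc {ι : Type*} (x : ι → ℝ) : EuclideanSpace ℝ ι := WithLp.toLp 2 x

@[simp] lemma toEuc_apply {ι : Type*} (x : ι → ℝ) (p : ι) : toEuc x p = x p := rfl

lemma frob_nonneg (A : Matrix ι₁ ι₂ ℝ) : 0 ≤ frob A := Real.sqrt_nonneg _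

lemma frob_sq (A : Matrix ι₁ ι₂ ℝ) : frob A ^ 2 = ∑ i, ∑ j, A i j ^ 2 :=
  Real.sq_sqrt (by positivity)

lemma frob_eq_norm (A : Matrix ι₁ ι₂ ℝ) :
    frob A = ‖(toEuc (ι := ι₁ × ι₂) fun pq => A pq.1 pq.2)‖ := by
  rw [EuclideanSpace.norm_eq]
  unfold frob
  congr 1
  rw [Fintype.sum_prod_type]
  simp [Real.norm_eq_abs, sq_abs]

lemma frob_add_le (A B : Matrix ι₁ ι₂ ℝ) : frob (A + B) ≤ frob A + frob B := by
  rw [frob_eq_norm, frob_eq_norm, frob_eq_norm]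
  have h : (toEuc (ι := ι₁ × ι₂) fun pq => (A + B) pq.1 pq.2)
      = (toEuc (ι := ι₁ × ι₂) fun pq => A pq.1 pq.2) + (toEuc (ι := ι₁ × ι₂) fun pq => B pq.1 pq.2) := by
    ext pq
    rw [PiLp.add_apply]
    simp [Matrix.add_apply]
  rw [h]
  exact norm_add_le _ _

lemma frob_sub_comm (A B : Matrix ι₁ ι₂ ℝ) : frob (A - B) = frob (B - A) := by
  unfold frob
  congr 1
  refine Finset.sum_congr rfl fun i _ => Finset.sum_congr rfl fun j _ => ?_
  simp [Matrix.sub_apply]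
  ring

lemma euclid_sum_apply {ι α : Type*} (s : Finset α) (y : α → EuclideanSpace ℝ ι) (p : ι) :
    (∑ j ∈ s, y j) p = ∑ j ∈ s, y j p := by
  induction s using Finset.cons_induction with
  | empty => rfl
  | cons a s ha ih => rw [Finset.sum_cons, Finset.sum_cons, PiLp.add_apply, ih]

lemma euclid_abs_apply_le_norm {ι : Type*} [Fintype ι] (x : EuclideanSpace ℝ ι) (p : ι) :
    |x p| ≤ ‖x‖ := by
  rw [EuclideanSpace.norm_eq, ← Real.sqrt_sq_eq_abs]
  apply Real.sqrt_le_sqrt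
  have : (x p) ^ 2 = ‖x p‖ ^ 2 := by simp [Real.norm_eq_abs, sq_abs]
  rw [this]
  exact Finset.single_le_sum (f := fun i => ‖x i‖ ^ 2) (fun i _ => by positivity)
    (Finset.mem_univ p)

/-- Key decomposition lemma: if all columns of `M` lie in a subspace of dimension at most `k`,
then `M` is a sum of `k` outer products with controlled entries. -/
lemma exists_decomp (k : ℕ) (M : Matrix ι₁ ι₂ ℝ) (V : Submodule ℝ (EuclideanSpace ℝ ι₁))
    (hVk : Module.finrank ℝ V ≤ k)
    (hcol : ∀ q, (toEuc fun p => M p q) ∈ V) :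
    ∃ (u : Fin k → ι₁ → ℝ) (v : Fin k → ι₂ → ℝ),
      (∀ j p, |u j p| ≤ 1) ∧ (∀ j q, |v j q| ≤ frob M) ∧
      M = ∑ j, vecMulVec (u j) (v j) := by
  classical
  set r := Module.finrank ℝ V with hr
  let b := stdOrthonormalBasis ℝ V
  let c : Fin k → EuclideanSpace ℝ ι₁ := fun j =>
    if h : (j : ℕ) < r then ((b ⟨j, h⟩ : V) : EuclideanSpace ℝ ι₁) else 0
  have hcnorm : ∀ j, ‖c j‖ ≤ 1 := by
    intro j
    by_cases h : (j : ℕ) < r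
    · simp only [c, dif_pos h]
      rw [← Submodule.coe_norm]
      exact le_of_eq (b.orthonormal.1 _)
    · simp [c, dif_neg h]
  have hexp : ∀ x : EuclideanSpace ℝ ι₁, x ∈ V →
      ∑ j : Fin k, (inner ℝ (c j) x : ℝ) • c j = x := by
    intro x hx
    have hb : ∑ i : Fin r, (inner ℝ ((b i : V) : EuclideanSpace ℝ ι₁) x : ℝ) •
        ((b i : V) : EuclideanSpace ℝ ι₁) = x := by
      have h1 : ∑ i : Fin r, (inner ℝ (b i) (⟨x, hx⟩ : V) : ℝ) • b i = (⟨x, hx⟩ : V) :=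
        b.sum_repr' ⟨x, hx⟩
      have h2 := congrArg (V.subtype) h1
      simpa [map_sum, _root_.map_smul, Submodule.coe_inner] using h2
    let f : ℕ → EuclideanSpace ℝ ι₁ := fun n =>
      if h : n < r then (inner ℝ ((b ⟨n, h⟩ : V) : EuclideanSpace ℝ ι₁) x : ℝ) •
        ((b ⟨n, h⟩ : V) : EuclideanSpace ℝ ι₁) else 0
    have e1 : ∑ j : Fin k, (inner ℝ (c j) x : ℝ) • c j = ∑ j : Fin k, f (j : ℕ) := by
      refine Finset.sum_congr rfl fun j _ => ?_
      by_cases h : (j : ℕ) < r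
      · simp only [c, f, dif_pos h]
      · simp [c, f, dif_neg h]
    have e2 : ∑ j : Fin k, f (j : ℕ) = ∑ n ∈ Finset.range k, f n :=
      Fin.sum_univ_eq_sum_range f k
    have e3 : ∑ n ∈ Finset.range r, f n = ∑ n ∈ Finset.range k, f n := by
      apply Finset.sum_subset (Finset.range_subset_range.2 hVk)
      intro n _ hn
      rw [Finset.mem_range, not_lt] at hn
      exact dif_neg (by omega)
    have e4 : ∑ n ∈ Finset.range r, f n = ∑ i : Fin r, f (i : ℕ) :=
      (Fin.sum_univ_eq_sum_range f r).symm
    rw [e1, e2, ← e3, e4]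
    rw [show ∑ i : Fin r, f (i : ℕ) = ∑ i : Fin r,
        (inner ℝ ((b i : V) : EuclideanSpace ℝ ι₁) x : ℝ) • ((b i : V) : EuclideanSpace ℝ ι₁) from
      Finset.sum_congr rfl fun i _ => by rw [show f (i : ℕ) = _ from dif_pos i.isLt]]
    exact hb
  refine ⟨fun j p => c j p, fun j q => (inner ℝ (c j) (toEuc fun p => M p q) : ℝ),
    ?_, ?_, ?_⟩
  · intro j p
    exact (euclid_abs_apply_le_norm (c j) p).trans (hcnorm j)
  · intro j q
    have h1 := abs_real_inner_le_norm (c j) (toEuc fun p => M p q)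
    have h2 : ‖(toEuc fun p => M p q)‖ ≤ frob M := by
      rw [EuclideanSpace.norm_eq]
      unfold frob
      apply Real.sqrt_le_sqrt
      calc ∑ p, ‖(toEuc fun p => M p q) p‖ ^ 2 = ∑ p, (M p q) ^ 2 := by simp [Real.norm_eq_abs, sq_abs]
        _ ≤ ∑ p, ∑ j, (M p j) ^ 2 := Finset.sum_le_sum fun p _ =>
            Finset.single_le_sum (f := fun j => (M p j) ^ 2) (fun j _ => sq_nonneg _)
              (Finset.mem_univ q)
    have h3 : ‖c j‖ * ‖(toEuc fun p => M p q)‖ ≤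
        1 * ‖(toEuc fun p => M p q)‖ :=
      mul_le_mul_of_nonneg_right (hcnorm j) (norm_nonneg _)
    rw [one_mul] at h3
    exact h1.trans (h3.trans h2)
  · funext p q
    have hx := hexp (toEuc fun p => M p q) (hcol q)
    have hpq : (∑ j : Fin k, (inner ℝ (c j) (toEuc fun p => M p q) : ℝ) • c j) p
        = M p q := by rw [hx]; rfl
    rw [euclid_sum_apply] at hpq
    simp only [PiLp.smul_apply, smul_eq_mul] at hpq
    rw [Matrix.sum_apply]
    simp only [Matrix.vecMulVec_apply]
    rw [← hpq]
    exact Finset.sum_congr rfl fun j _ => mul_comm _ _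

lemma rank_sum_vecMulVec_le {k : ℕ} (u : Fin k → ι₁ → ℝ) (v : Fin k → ι₂ → ℝ) :
    (∑ j, vecMulVec (u j) (v j)).rank ≤ k := by
  classical
  rw [Matrix.rank_eq_finrank_span_cols]
  have hle : Submodule.span ℝ (Set.range (∑ j, vecMulVec (u j) (v j))ᵀ) ≤
      Submodule.span ℝ (Set.range u) := by
    rw [Submodule.span_le]
    rintro _ ⟨q, rfl⟩
    have h : (∑ j, vecMulVec (u j) (v j))ᵀ q = ∑ j, v j q • u j := by
      funext p
      simp [Matrix.transpose_apply, Matrix.sum_apply, Matrix.vecMulVec_apply,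
        Finset.sum_apply, Pi.smul_apply, smul_eq_mul, mul_comm]
    rw [h]
    exact Submodule.sum_mem _ fun j _ =>
      Submodule.smul_mem _ _ (Submodule.subset_span ⟨j, rfl⟩)
  refine (Submodule.finrank_mono hle).trans ?_
  refine (finrank_span_le_card (Set.range u)).trans ?_
  rw [Set.toFinset_card]
  exact (Fintype.card_range_le u).trans (by simp)

end Helpers

section RearrangeLemmas

variable {m₁ m₂ n₁ n₂ : ℕ}

lemma rearrange_sub (A B : Matrix (Fin m₁ × Fin m₂) (Fin n₁ × Fin n₂) ℝ) :
    rearrange (A - B) = rearrange A - rearrange B := rfl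

lemma rearrange_sum {α : Type*} (s : Finset α)
    (S : α → Matrix (Fin m₁ × Fin m₂) (Fin n₁ × Fin n₂) ℝ) :
    rearrange (∑ j ∈ s, S j) = ∑ j ∈ s, rearrange (S j) := by
  funext p q
  simp [rearrange, Matrix.sum_apply]

lemma rearrange_kron (L : Matrix (Fin m₁) (Fin n₁) ℝ) (R : Matrix (Fin m₂) (Fin n₂) ℝ) :
    rearrange (L ⊗ₖ R) = vecMulVec (fun p => L p.1 p.2) (fun q => R q.1 q.2) := rfl

lemma frob_rearrange (A : Matrix (Fin m₁ × Fin m₂) (Fin n₁ × Fin n₂) ℝ) :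
    frob (rearrange A) = frob A := by
  unfold frob
  congr 1
  simp only [Fintype.sum_prod_type, rearrange]
  exact Finset.sum_congr rfl fun i₁ _ => Finset.sum_comm

end RearrangeLemmas

/-- For every `W ∈ ℝ^{m₁m₂×n₁n₂}` and every `k ≥ 1`, the minimal squared-Frobenius error of
approximating `W` by a sum of `k` Kronecker products equals the minimal squared-Frobenius
error of approximating the rearrangement `ℛ(W)` by a matrix of rank at most `k`; both minima
are attained. -/
theorem kronecker_sum_min_eq_lowrank_min {m₁ m₂ n₁ n₂ : ℕ}
    (W : Matrix (Fin m₁ × Fin m₂) (Fin n₁ × Fin n₂) ℝ) (k : ℕ) (hk : 1 ≤ k) :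
    ∃ v : ℝ,
      IsLeast {e : ℝ | ∃ (Ls : Fin k → Matrix (Fin m₁) (Fin n₁) ℝ)
          (Rs : Fin k → Matrix (Fin m₂) (Fin n₂) ℝ),
          e = frob (W - ∑ j, Ls j ⊗ₖ Rs j) ^ 2} v ∧
      IsLeast {e : ℝ | ∃ M : Matrix (Fin m₁ × Fin n₁) (Fin m₂ × Fin n₂) ℝ,
          M.rank ≤ k ∧ e = frob (rearrange W - M) ^ 2} v := by
  classical
  set rW := rearrange W with hrW
  set Φ : (Fin k → (Fin m₁ × Fin n₁) → ℝ) → (Fin k → (Fin m₂ × Fin n₂) → ℝ) →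
      Matrix (Fin m₁ × Fin n₁) (Fin m₂ × Fin n₂) ℝ :=
    fun u v => ∑ j, vecMulVec (u j) (v j) with hΦ
  set g : ((Fin k → (Fin m₁ × Fin n₁) → ℝ) × (Fin k → (Fin m₂ × Fin n₂) → ℝ)) → ℝ :=
    fun z => frob (rW - Φ z.1 z.2) ^ 2 with hg
  have hgc : Continuous g := by
    have hrepr : g = fun z => ∑ p : Fin m₁ × Fin n₁, ∑ q : Fin m₂ × Fin n₂,
        (rW p q - ∑ j, z.1 j p * z.2 j q) ^ 2 := by
      funext z
      simp only [hg]
      rw [frob_sq]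
      refine Finset.sum_congr rfl fun p _ => Finset.sum_congr rfl fun q _ => ?_
      simp [hΦ, Matrix.sub_apply, Matrix.sum_apply, Matrix.vecMulVec_apply]
    rw [hrepr]
    apply continuous_finset_sum; intro p _
    apply continuous_finset_sum; intro q _
    apply Continuous.pow
    apply Continuous.sub continuous_const
    apply continuous_finset_sum; intro j _
    fun_prop
  set C : ℝ := 2 * frob rW with hC
  have hC0 : 0 ≤ C := mul_nonneg (by norm_num) (frob_nonneg rW)
  set K : Set ((Fin k → (Fin m₁ × Fin n₁) → ℝ) × (Fin k → (Fin m₂ × Fin n₂) → ℝ)) :=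
    (Set.univ.pi fun _ : Fin k => Set.univ.pi fun _ => Set.Icc (-1 : ℝ) 1) ×ˢ
    (Set.univ.pi fun _ : Fin k => Set.univ.pi fun _ => Set.Icc (-C) C) with hK
  have hKc : IsCompact K :=
    IsCompact.prod (isCompact_univ_pi fun _ => isCompact_univ_pi fun _ => isCompact_Icc)
      (isCompact_univ_pi fun _ => isCompact_univ_pi fun _ => isCompact_Icc)
  have hK0 : ((0, 0) : (Fin k → (Fin m₁ × Fin n₁) → ℝ) × (Fin k → (Fin m₂ × Fin n₂) → ℝ)) ∈ K := by
    constructor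
    · intro j _
      intro p _
      simp only [Pi.zero_apply, Set.mem_Icc]
      constructor <;> norm_num
    · intro j _
      intro q _
      simp only [Pi.zero_apply, Set.mem_Icc]
      constructor <;> linarith
  obtain ⟨z0, hz0K, hz0⟩ := hKc.exists_isMinOn ⟨(0, 0), hK0⟩ hgc.continuousOn
  have hzmin : ∀ z ∈ K, g z0 ≤ g z := fun z hz => hz0 hz
  have hΦ00 : Φ 0 0 = 0 := by
    rw [hΦ]
    funext p q
    simp [Matrix.sum_apply, Matrix.vecMulVec_apply]
  -- the key lower bound over *all* parameters
  have hlow : ∀ u v, g z0 ≤ g (u, v) := by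
    intro u v
    by_cases hcase : frob (rW - Φ u v) < frob rW
    · have hM : frob (Φ u v) ≤ C := by
        have h1 : frob (Φ u v) ≤ frob (Φ u v - rW) + frob rW := by
          have h := frob_add_le (Φ u v - rW) rW
          rw [sub_add_cancel] at h
          exact h
        have h2 : frob (Φ u v - rW) = frob (rW - Φ u v) := frob_sub_comm _ _
        rw [hC]
        linarith
      have hcol : ∀ q, (toEuc fun p => (Φ u v) p q) ∈
          Submodule.span ℝ (Set.range (fun j => (toEuc (u j)))) := by
        intro q
        have h : (toEuc fun p => (Φ u v) p q) =
            ∑ j, v j q • (toEuc (u j)) := by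
          ext p
          rw [euclid_sum_apply]
          simp [hΦ, Matrix.sum_apply, Matrix.vecMulVec_apply, PiLp.smul_apply, mul_comm]
        rw [h]
        exact Submodule.sum_mem _ fun j _ =>
          Submodule.smul_mem _ _ (Submodule.subset_span ⟨j, rfl⟩)
      have hrank : Module.finrank ℝ
          (Submodule.span ℝ (Set.range (fun j => (toEuc (u j))))) ≤ k := by
        refine (finrank_span_le_card _).trans ?_
        rw [Set.toFinset_card]
        exact (Fintype.card_range_le _).trans (by simp)
      obtain ⟨u', v', hu', hv', hMeq⟩ := exists_decomp k (Φ u v) _ hrank hcol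
      have hmem : ((u', v') : (Fin k → (Fin m₁ × Fin n₁) → ℝ) ×
          (Fin k → (Fin m₂ × Fin n₂) → ℝ)) ∈ K := by
        constructor
        · intro j _
          intro p _
          exact Set.mem_Icc.2 (abs_le.1 (hu' j p))
        · intro j _
          intro q _
          exact Set.mem_Icc.2 (abs_le.1 ((hv' j q).trans hM))
      have h1 : g z0 ≤ g (u', v') := hzmin _ hmem
      have h2 : g (u', v') = g (u, v) := by
        simp only [hg]
        rw [show Φ u' v' = Φ u v from hMeq.symm]
      linarith
    · push_neg at hcase
      have h1 : g z0 ≤ g (0, 0) := hzmin _ hK0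
      have h2 : g (0, 0) = frob rW ^ 2 := by
        simp only [hg]
        rw [hΦ00, sub_zero]
      have h3 : frob rW ^ 2 ≤ g (u, v) := by
        simp only [hg]
        exact pow_le_pow_left₀ (frob_nonneg _) hcase 2
      linarith
  -- correspondence between the Kronecker picture and the rearranged picture
  have hcorr : ∀ (Ls : Fin k → Matrix (Fin m₁) (Fin n₁) ℝ)
      (Rs : Fin k → Matrix (Fin m₂) (Fin n₂) ℝ),
      frob (W - ∑ j, Ls j ⊗ₖ Rs j) ^ 2
        = g (fun j p => Ls j p.1 p.2, fun j q => Rs j q.1 q.2) := by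
    intro Ls Rs
    simp only [hg]
    rw [← frob_rearrange (W - ∑ j, Ls j ⊗ₖ Rs j)]
    have h : rearrange (W - ∑ j, Ls j ⊗ₖ Rs j) =
        rW - Φ (fun j p => Ls j p.1 p.2) (fun j q => Rs j q.1 q.2) := by
      rw [rearrange_sub, rearrange_sum, hrW, hΦ]
      congr 1
    rw [h]
  refine ⟨g z0, ⟨⟨fun j => Matrix.of fun i i' => z0.1 j (i, i'),
      fun j => Matrix.of fun i i' => z0.2 j (i, i'), ?_⟩, ?_⟩, ⟨⟨Φ z0.1 z0.2, ?_, ?_⟩, ?_⟩⟩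
  · exact hcorr _ _ |>.symm ▸ rfl
  · rintro e ⟨Ls, Rs, rfl⟩
    rw [hcorr]
    exact hlow _ _
  · exact rank_sum_vecMulVec_le _ _
  · rfl
  · rintro e ⟨M, hMr, rfl⟩
    set eq := (WithLp.linearEquiv 2 ℝ ((Fin m₁ × Fin n₁) → ℝ)).symm with heq
    set V : Submodule ℝ (EuclideanSpace ℝ (Fin m₁ × Fin n₁)) :=
      Submodule.map eq.toLinearMap (Submodule.span ℝ (Set.range M.col)) with hV
    have hfr : Module.finrank ℝ V ≤ k := by
      rw [hV, LinearEquiv.finrank_map_eq, ← Matrix.rank_eq_finrank_span_cols]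
      exact hMr
    have hcol : ∀ q, (toEuc fun p => M p q) ∈ V := by
      intro q
      exact ⟨Mᵀ q, Submodule.subset_span ⟨q, rfl⟩, rfl⟩
    obtain ⟨u, v, _, _, hMeq⟩ := exists_decomp k M V hfr hcol
    have h : frob (rearrange W - M) ^ 2 = g (u, v) := by
      simp only [hg]
      rw [show Φ u v = M from hMeq.symm]
    rw [h]
    exact hlow u v
end

section
/- For every W ∈ ℝ^{m₁m₂×n₁n₂}, letting r = rank(ℛ(W)), there exist matrices L^{(i)} ∈ ℝ^{m₁×n₁} and R^{(i)} ∈ ℝ^{m₂×n₂}, i = 1,…,r, such that W = Σ_{i=1}^r L^{(i)} ⊗ R^{(i)} exactly; consequently, for every a ∈ ℝ^{n₁n₂}, W a = vec(Σ_{i=1}^r R^{(i)} · mat(a) · L^{(i)ᵀ}). -/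
open Matrix Kronecker

/-- Column-stacking vectorization: for `X ∈ ℝ^{q×p}`, `vec X` is indexed by pairs
`(j₁, j₂) ∈ [p]×[q]` with `vec X (j₁, j₂) = X j₂ j₁`. -/
def vec {a b : ℕ} (X : Matrix (Fin b) (Fin a) ℝ) : Fin a × Fin b → ℝ :=
  fun p => X p.2 p.1

/-- Matricization, the inverse of `vec`. -/
def mat {a b : ℕ} (x : Fin a × Fin b → ℝ) : Matrix (Fin b) (Fin a) ℝ :=
  fun j₂ j₁ => x (j₁, j₂)

lemma rank_factorization {p q : Type*} [Fintype p] [Fintype q] [DecidableEq q]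
    (M : Matrix p q ℝ) :
    ∃ (A : Matrix p (Fin M.rank) ℝ) (B : Matrix (Fin M.rank) q ℝ), M = A * B := by
  set S := LinearMap.range M.mulVecLin
  have b : Module.Basis (Fin M.rank) ℝ S := Module.finBasisOfFinrankEq ℝ S rfl
  have hcol : ∀ j : q, (fun i => M i j) ∈ S := by
    intro j
    exact ⟨Pi.single j 1, by ext i; simp [mulVecLin, mulVec, dotProduct, Pi.single_apply]⟩
  refine ⟨fun i k => (b k : p → ℝ) i, fun k j => b.repr ⟨_, hcol j⟩ k, ?_⟩
  ext i j
  have := b.sum_repr ⟨fun i => M i j, hcol j⟩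
  have h2 := congrFun (congrArg (Subtype.val) this) i
  simp only [AddSubmonoidClass.coe_finset_sum, Finset.sum_apply, SetLike.val_smul,
    Pi.smul_apply, smul_eq_mul] at h2
  change M i j = ∑ k, (b k : p → ℝ) i * b.repr ⟨_, hcol j⟩ k
  rw [← h2]
  exact Finset.sum_congr rfl fun k _ => mul_comm _ _

/-- Every `W ∈ ℝ^{m₁m₂×n₁n₂}` is exactly a sum of `r = rank(ℛ(W))` Kronecker products,
and consequently `W a = vec(Σᵢ R⁽ⁱ⁾ · mat(a) · L⁽ⁱ⁾ᵀ)` for every `a ∈ ℝ^{n₁n₂}`. -/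
theorem exists_exact_kronecker_decomposition {m₁ m₂ n₁ n₂ : ℕ}
    (W : Matrix (Fin m₁ × Fin m₂) (Fin n₁ × Fin n₂) ℝ) :
    ∃ (Ls : Fin ((rearrange W).rank) → Matrix (Fin m₁) (Fin n₁) ℝ)
      (Rs : Fin ((rearrange W).rank) → Matrix (Fin m₂) (Fin n₂) ℝ),
      W = ∑ i, Ls i ⊗ₖ Rs i ∧
      ∀ a : Fin n₁ × Fin n₂ → ℝ,
        W *ᵥ a = _root_.vec (∑ i, Rs i * mat a * (Ls i)ᵀ) := by
  obtain ⟨A, B, hAB⟩ := rank_factorization (rearrange W)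
  refine ⟨fun i => Matrix.of fun i₁ j₁ => A (i₁, j₁) i, fun i => Matrix.of fun i₂ j₂ => B i (i₂, j₂), ?_, ?_⟩
  · ext ⟨i₁, i₂⟩ ⟨j₁, j₂⟩
    have : W (i₁, i₂) (j₁, j₂) = (A * B) (i₁, j₁) (i₂, j₂) := by
      rw [← hAB]; rfl
    simp only [this, Matrix.mul_apply, Matrix.sum_apply, kroneckerMap_apply, of_apply]
  · intro a
    funext ⟨i₁, i₂⟩
    have hW : ∀ j₁ j₂, W (i₁, i₂) (j₁, j₂) = ∑ i, A (i₁, j₁) i * B i (i₂, j₂) := by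
      intro j₁ j₂
      have : W (i₁, i₂) (j₁, j₂) = (A * B) (i₁, j₁) (i₂, j₂) := by rw [← hAB]; rfl
      simp only [this, Matrix.mul_apply]
    simp only [mulVec, dotProduct, _root_.vec, mat, Matrix.mul_apply, Matrix.sum_apply,
      Fintype.sum_prod_type, transpose_apply, of_apply, hW, Finset.sum_mul, Finset.mul_sum]
    have swap : ∀ (f : Fin n₁ → Fin n₂ → Fin ((rearrange W).rank) → ℝ),
        ∑ j₁, ∑ j₂, ∑ i, f j₁ j₂ i = ∑ i, ∑ j₁, ∑ j₂, f j₁ j₂ i := by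
      intro f
      exact Eq.trans (Finset.sum_congr rfl fun j₁ _ => Finset.sum_comm) Finset.sum_comm
    rw [swap]
    exact Finset.sum_congr rfl fun i _ => Finset.sum_congr rfl fun j₁ _ =>
      Finset.sum_congr rfl fun j₂ _ => by ring
end

section
/- Let φ₁, φ₂ : ℝ → ℝ be c₁-Lipschitz and c₂-Lipschitz respectively (c₁, c₂ ≥ 0), and for i = 1,…,k let W_L^{(i)} ∈ ℝ^{n₁×m₁}, B_L^{(i)} ∈ ℝ^{n₂×m₁}, W_R^{(i)} ∈ ℝ^{m₂×n₂}, B_R^{(i)} ∈ ℝ^{m₂×m₁}. Define the Kronecker dual layer map f : ℝ^{n₂×n₁} → ℝ^{m₂×m₁} by f(X) = φ₁( Σ_{i=1}^k [ W_R^{(i)} · φ₂( X·W_L^{(i)} + B_L^{(i)} ) + B_R^{(i)} ] ), where φ₁, φ₂ act entrywise. Then f is Lipschitz with constant C = c₁·c₂·Σ_{i=1}^k ‖W_L^{(i)}‖_F·‖W_R^{(i)}‖_F, i.e. ‖f(X₁) − f(X₂)‖_F ≤ C·‖X₁ − X₂‖_F for all X₁, X₂ ∈ ℝ^{n₂×n₁}.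 -/
open Matrix


attribute [local instance] Matrix.frobeniusSeminormedAddCommGroup

lemma frob_eq_norm_s7 {m n : Type*} [Fintype m] [Fintype n] (A : Matrix m n ℝ) :
    frob A = ‖A‖ := by
  rw [frobenius_norm_def, frob, Real.sqrt_eq_rpow]
  congr 1
  refine Finset.sum_congr rfl fun i _ => Finset.sum_congr rfl fun j _ => ?_
  rw [Real.norm_eq_abs, Real.rpow_two, sq_abs]

lemma frob_nonneg_s7 {m n : Type*} [Fintype m] [Fintype n] (A : Matrix m n ℝ) : 0 ≤ frob A :=
  Real.sqrt_nonneg _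

lemma frob_map_sub_le {m n : Type*} [Fintype m] [Fintype n] (φ : ℝ → ℝ) (c : ℝ) (hc : 0 ≤ c)
    (hφ : ∀ s t : ℝ, |φ s - φ t| ≤ c * |s - t|) (A B : Matrix m n ℝ) :
    frob (A.map φ - B.map φ) ≤ c * frob (A - B) := by
  rw [frob, frob, show c * Real.sqrt (∑ i, ∑ j, ((A - B) i j) ^ 2)
      = Real.sqrt (c ^ 2 * ∑ i, ∑ j, ((A - B) i j) ^ 2) by
    rw [Real.sqrt_mul (sq_nonneg c), Real.sqrt_sq hc]]
  apply Real.sqrt_le_sqrt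
  rw [Finset.mul_sum]
  refine Finset.sum_le_sum fun i _ => ?_
  rw [Finset.mul_sum]
  refine Finset.sum_le_sum fun j _ => ?_
  have h := hφ (A i j) (B i j)
  calc ((A.map φ - B.map φ) i j) ^ 2 = |φ (A i j) - φ (B i j)| ^ 2 := by
        simp [sq_abs, Matrix.sub_apply, Matrix.map_apply]
    _ ≤ (c * |A i j - B i j|) ^ 2 := by
        apply pow_le_pow_left₀ (abs_nonneg _) h
    _ = c ^ 2 * ((A - B) i j) ^ 2 := by rw [mul_pow, sq_abs]; simp [Matrix.sub_apply]

/-- The Kronecker dual layer map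
`f(X) = φ₁( Σᵢ [ W_R⁽ⁱ⁾ · φ₂( X·W_L⁽ⁱ⁾ + B_L⁽ⁱ⁾ ) + B_R⁽ⁱ⁾ ] )` (activations entrywise)
is Lipschitz with constant `c₁·c₂·Σᵢ ‖W_L⁽ⁱ⁾‖_F·‖W_R⁽ⁱ⁾‖_F`. -/
theorem kdl_layer_lipschitz {m₁ m₂ n₁ n₂ k : ℕ}
    (φ₁ φ₂ : ℝ → ℝ) (c₁ c₂ : ℝ) (hc₁ : 0 ≤ c₁) (hc₂ : 0 ≤ c₂)
    (hφ₁ : ∀ s t : ℝ, |φ₁ s - φ₁ t| ≤ c₁ * |s - t|)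
    (hφ₂ : ∀ s t : ℝ, |φ₂ s - φ₂ t| ≤ c₂ * |s - t|)
    (WL : Fin k → Matrix (Fin n₁) (Fin m₁) ℝ)
    (BL : Fin k → Matrix (Fin n₂) (Fin m₁) ℝ)
    (WR : Fin k → Matrix (Fin m₂) (Fin n₂) ℝ)
    (BR : Fin k → Matrix (Fin m₂) (Fin m₁) ℝ)
    (f : Matrix (Fin n₂) (Fin n₁) ℝ → Matrix (Fin m₂) (Fin m₁) ℝ)
    (hf : ∀ X, f X = (∑ i, (WR i * (X * WL i + BL i).map φ₂ + BR i)).map φ₁)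
    (X₁ X₂ : Matrix (Fin n₂) (Fin n₁) ℝ) :
    frob (f X₁ - f X₂) ≤
      (c₁ * c₂ * ∑ i, frob (WL i) * frob (WR i)) * frob (X₁ - X₂) := by
  set S₁ := ∑ i, (WR i * (X₁ * WL i + BL i).map φ₂ + BR i) with hS₁
  set S₂ := ∑ i, (WR i * (X₂ * WL i + BL i).map φ₂ + BR i) with hS₂
  have step1 : frob (f X₁ - f X₂) ≤ c₁ * frob (S₁ - S₂) := by
    rw [hf X₁, hf X₂]; exact frob_map_sub_le φ₁ c₁ hc₁ hφ₁ _ _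
  have hdiff : S₁ - S₂ =
      ∑ i, WR i * ((X₁ * WL i + BL i).map φ₂ - (X₂ * WL i + BL i).map φ₂) := by
    rw [hS₁, hS₂, ← Finset.sum_sub_distrib]
    refine Finset.sum_congr rfl fun i _ => ?_
    rw [Matrix.mul_sub]; abel
  have step2 : frob (S₁ - S₂) ≤
      ∑ i, frob (WR i) * (c₂ * (frob (X₁ - X₂) * frob (WL i))) := by
    rw [hdiff]
    calc frob (∑ i, WR i * ((X₁ * WL i + BL i).map φ₂ - (X₂ * WL i + BL i).map φ₂))
        ≤ ∑ i, frob (WR i * ((X₁ * WL i + BL i).map φ₂ - (X₂ * WL i + BL i).map φ₂)) := by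
          simp only [frob_eq_norm_s7]; exact norm_sum_le _ _
      _ ≤ ∑ i, frob (WR i) * (c₂ * (frob (X₁ - X₂) * frob (WL i))) := by
          refine Finset.sum_le_sum fun i _ => ?_
          calc frob (WR i * ((X₁ * WL i + BL i).map φ₂ - (X₂ * WL i + BL i).map φ₂))
              ≤ frob (WR i) * frob ((X₁ * WL i + BL i).map φ₂ - (X₂ * WL i + BL i).map φ₂) := by
                simp only [frob_eq_norm_s7]; exact Matrix.frobenius_norm_mul _ _
            _ ≤ frob (WR i) * (c₂ * frob ((X₁ * WL i + BL i) - (X₂ * WL i + BL i))) := by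
                exact mul_le_mul_of_nonneg_left
                  (frob_map_sub_le φ₂ c₂ hc₂ hφ₂ _ _) (frob_nonneg_s7 _)
            _ = frob (WR i) * (c₂ * frob ((X₁ - X₂) * WL i)) := by
                rw [show (X₁ * WL i + BL i) - (X₂ * WL i + BL i) = (X₁ - X₂) * WL i by
                  rw [Matrix.sub_mul]; abel]
            _ ≤ frob (WR i) * (c₂ * (frob (X₁ - X₂) * frob (WL i))) := by
                refine mul_le_mul_of_nonneg_left
                  (mul_le_mul_of_nonneg_left ?_ hc₂) (frob_nonneg_s7 _)
                simp only [frob_eq_norm_s7]; exact Matrix.frobenius_norm_mul _ _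
  calc frob (f X₁ - f X₂) ≤ c₁ * frob (S₁ - S₂) := step1
    _ ≤ c₁ * ∑ i, frob (WR i) * (c₂ * (frob (X₁ - X₂) * frob (WL i))) :=
        mul_le_mul_of_nonneg_left step2 hc₁
    _ = (c₁ * c₂ * ∑ i, frob (WL i) * frob (WR i)) * frob (X₁ - X₂) := by
        simp only [Finset.mul_sum, Finset.sum_mul]
        exact Finset.sum_congr rfl fun i _ => by ring
end
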